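/- arXiv:1506.03216 — 2 statements merged into one kernel-verified Lean document; each statement's English description precedes it below -/
import Mathlib

section
/- Define the momentum map fibrewise by J(φ) := φ ∘ Tκ_p(e) ∈ T_e^*G for φ ∈ T_p^*P. Then for all p ∈ P, g ∈ G and φ ∈ T_p^*P one has J(T^*κ_g(p)φ) = J(φ) ∘ Ad_g; that is, J is equivariant with respect to the cotangent-lifted action of G on covectors and the coadjoint action Ad^*_{g^{-1}} on T_e^*G. -/
open Manifold

/-- The momentum map `J(φ) := φ ∘ Tκ_p(e)` is equivariant: for the cotangent-lifted
action `T^*κ_g(p)φ := φ ∘ Tκ_{g⁻¹}(pg)` one has `J(T^*κ_g(p)φ) = J(φ) ∘ Ad_g`. -/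
theorem momentum_map_equivariance
    {E : Type*} [NormedAddCommGroup E] [NormedSpace ℝ E] [FiniteDimensional ℝ E]
    {G : Type*} [TopologicalSpace G] [ChartedSpace E G] [Group G]
    [IsManifold 𝓘(ℝ, E) (⊤ : ℕ∞) G] [LieGroup 𝓘(ℝ, E) (⊤ : ℕ∞) G]
    {F : Type*} [NormedAddCommGroup F] [NormedSpace ℝ F] [FiniteDimensional ℝ F]
    {P : Type*} [TopologicalSpace P] [ChartedSpace F P]
    [IsManifold 𝓘(ℝ, F) (⊤ : ℕ∞) P]
    (κ : P → G → P)
    (hκ_one : ∀ p : P, κ p 1 = p)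
    (hκ_mul : ∀ (p : P) (g h : G), κ (κ p g) h = κ p (g * h))
    (hκ_smooth : ContMDiff (𝓘(ℝ, F).prod 𝓘(ℝ, E)) 𝓘(ℝ, F) (⊤ : ℕ∞)
      (fun q : P × G => κ q.1 q.2))
    (p : P) (g : G) (φ : TangentSpace 𝓘(ℝ, F) p →L[ℝ] ℝ) :
    ((φ.comp (mfderiv 𝓘(ℝ, F) 𝓘(ℝ, F) (fun q : P => κ q g⁻¹) (κ p g))).comp
        (mfderiv 𝓘(ℝ, E) 𝓘(ℝ, F) (fun h : G => κ (κ p g) h) (1 : G)))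
      = ((φ.comp (mfderiv 𝓘(ℝ, E) 𝓘(ℝ, F) (fun h : G => κ p h) (1 : G))).comp
          (mfderiv 𝓘(ℝ, E) 𝓘(ℝ, E) (fun h : G => g * h * g⁻¹) (1 : G))) := by
  have hR : ∀ a : G, ContMDiff 𝓘(ℝ, F) 𝓘(ℝ, F) (⊤ : ℕ∞) (fun q : P => κ q a) := by
    intro a
    exact hκ_smooth.comp (contMDiff_id.prodMk contMDiff_const)
  have hL : ∀ q : P, ContMDiff 𝓘(ℝ, E) 𝓘(ℝ, F) (⊤ : ℕ∞) (fun h : G => κ q h) := by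
    intro q
    exact hκ_smooth.comp (contMDiff_const.prodMk contMDiff_id)
  have hconj : ContMDiff 𝓘(ℝ, E) 𝓘(ℝ, E) (⊤ : ℕ∞) (fun h : G => g * h * g⁻¹) :=
    (contMDiff_const.mul contMDiff_id).mul contMDiff_const
  have hchain1 :
      mfderiv 𝓘(ℝ, E) 𝓘(ℝ, F) (fun h : G => κ (κ (κ p g) h) g⁻¹) (1 : G)
        = (mfderiv 𝓘(ℝ, F) 𝓘(ℝ, F) (fun q : P => κ q g⁻¹) (κ p g)).comp
            (mfderiv 𝓘(ℝ, E) 𝓘(ℝ, F) (fun h : G => κ (κ p g) h) (1 : G)) := by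
    have := mfderiv_comp (I' := 𝓘(ℝ, F)) (1 : G)
      (((hR g⁻¹) (κ (κ p g) 1)).mdifferentiableAt (by simp))
      (((hL (κ p g)) (1 : G)).mdifferentiableAt (by simp))
    simp only [Function.comp_def] at this
    rw [hκ_one] at this
    exact this
  have hchain2 :
      mfderiv 𝓘(ℝ, E) 𝓘(ℝ, F) (fun h : G => κ p (g * h * g⁻¹)) (1 : G)
        = (mfderiv 𝓘(ℝ, E) 𝓘(ℝ, F) (fun h : G => κ p h) (1 : G)).comp
            (mfderiv 𝓘(ℝ, E) 𝓘(ℝ, E) (fun h : G => g * h * g⁻¹) (1 : G)) := by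
    have := mfderiv_comp (I' := 𝓘(ℝ, E)) (1 : G)
      (((hL p) (g * 1 * g⁻¹)).mdifferentiableAt (by simp))
      ((hconj (1 : G)).mdifferentiableAt (by simp))
    simp only [Function.comp_def] at this
    rw [mul_one, mul_inv_cancel] at this
    exact this
  have hfun : (fun h : G => κ (κ (κ p g) h) g⁻¹) = (fun h : G => κ p (g * h * g⁻¹)) := by
    funext h
    rw [hκ_mul, hκ_mul, mul_assoc]
  ext v
  have h1 := congrArg (fun L => φ (L v)) hchain1
  have h2 := congrArg (fun L => φ (L v)) hchain2
  rw [hfun] at h1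
  exact h1.symm.trans h2
end

section
/- Let k ∈ K, u ∈ N and h := σ(k)ι(u), and let φ ∈ T_h^*H, θ ∈ T_k^*K, χ ∈ T_u^*N be covectors satisfying φ ∘ T(R_{ι(u)} ∘ σ)(k) = θ and φ ∘ T(L_{σ(k)} ∘ ι)(u) = χ. Then φ ∘ T(L_h ∘ ι)(e) = χ ∘ TL^N_u(e), where L^N_u denotes left translation by u in N; that is, the N-momentum φ ∘ TL_h(e) ∘ Tι(e) of φ equals the momentum J_N(χ) := χ ∘ TL^N_u(e) of χ. -/
open Manifold

/-- For `h := σ(k)ι(u)` and covectors `φ, θ, χ` with `φ ∘ T(R_{ι(u)} ∘ σ)(k) = θ` and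
`φ ∘ T(L_{σ(k)} ∘ ι)(u) = χ`, one has `φ ∘ T(L_h ∘ ι)(e) = χ ∘ TL^N_u(e)`; that is,
the `N`-momentum of `φ` equals the momentum `J_N(χ) = χ ∘ TL^N_u(e)` of `χ`. -/
theorem covector_momentum_factorization
    {EH : Type*} [NormedAddCommGroup EH] [NormedSpace ℝ EH] [FiniteDimensional ℝ EH]
    {H : Type*} [TopologicalSpace H] [ChartedSpace EH H] [Group H]
    [IsManifold 𝓘(ℝ, EH) (⊤ : ℕ∞) H] [LieGroup 𝓘(ℝ, EH) (⊤ : ℕ∞) H]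
    {EK : Type*} [NormedAddCommGroup EK] [NormedSpace ℝ EK] [FiniteDimensional ℝ EK]
    {K : Type*} [TopologicalSpace K] [ChartedSpace EK K] [Group K]
    [IsManifold 𝓘(ℝ, EK) (⊤ : ℕ∞) K] [LieGroup 𝓘(ℝ, EK) (⊤ : ℕ∞) K]
    {EN : Type*} [NormedAddCommGroup EN] [NormedSpace ℝ EN] [FiniteDimensional ℝ EN]
    {N : Type*} [TopologicalSpace N] [ChartedSpace EN N] [Group N]
    [IsManifold 𝓘(ℝ, EN) (⊤ : ℕ∞) N] [LieGroup 𝓘(ℝ, EN) (⊤ : ℕ∞) N]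
    (ι : N → H) (hι_hom : ∀ a b : N, ι (a * b) = ι a * ι b)
    (hι_inj : Function.Injective ι)
    (hι_emb : Topology.IsEmbedding ι)
    (hι_smooth : ContMDiff 𝓘(ℝ, EN) 𝓘(ℝ, EH) (⊤ : ℕ∞) ι)
    (μ : H → K) (hμ_hom : ∀ a b : H, μ (a * b) = μ a * μ b)
    (hμ_surj : Function.Surjective μ)
    (hμ_smooth : ContMDiff 𝓘(ℝ, EH) 𝓘(ℝ, EK) (⊤ : ℕ∞) μ)
    (hμ_ker : ∀ h : H, μ h = 1 ↔ h ∈ Set.range ι)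
    (σ : K → H) (hσ_smooth : ContMDiff 𝓘(ℝ, EK) 𝓘(ℝ, EH) (⊤ : ℕ∞) σ)
    (hμσ : ∀ k : K, μ (σ k) = k) (hσ1 : σ 1 = 1)
    (k : K) (u : N)
    (φ : TangentSpace 𝓘(ℝ, EH) (σ k * ι u) →L[ℝ] ℝ)
    (θ : TangentSpace 𝓘(ℝ, EK) k →L[ℝ] ℝ)
    (χ : TangentSpace 𝓘(ℝ, EN) u →L[ℝ] ℝ)
    (hθ : φ.comp (mfderiv 𝓘(ℝ, EK) 𝓘(ℝ, EH) (fun x : K => σ x * ι u) k) = θ)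
    (hχ : φ.comp (mfderiv 𝓘(ℝ, EN) 𝓘(ℝ, EH) (fun n : N => σ k * ι n) u) = χ) :
    φ.comp (mfderiv 𝓘(ℝ, EN) 𝓘(ℝ, EH) (fun n : N => (σ k * ι u) * ι n) (1 : N))
      = χ.comp (mfderiv 𝓘(ℝ, EN) 𝓘(ℝ, EN) (fun n : N => u * n) (1 : N)) := by
  have hf : ContMDiff 𝓘(ℝ, EN) 𝓘(ℝ, EH) (⊤ : ℕ∞) (fun n : N => σ k * ι n) :=
    (contMDiff_const.mul hι_smooth)
  have hg : ContMDiff 𝓘(ℝ, EN) 𝓘(ℝ, EN) (⊤ : ℕ∞) (fun n : N => u * n) :=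
    (contMDiff_const.mul contMDiff_id)
  have heq : (fun n : N => (σ k * ι u) * ι n)
      = (fun n : N => σ k * ι n) ∘ (fun n : N => u * n) := by
    funext n
    simp [Function.comp, hι_hom, mul_assoc]
  rw [heq, mfderiv_comp (1 : N) (hf.mdifferentiable (by simp) _)
    (hg.mdifferentiable (by simp) _)]
  have : (fun n : N => u * n) 1 = u := mul_one u
  rw [← hχ]
  ext v
  show φ (mfderiv 𝓘(ℝ, EN) 𝓘(ℝ, EH) (fun n : N => σ k * ι n) (u * 1)
      (mfderiv 𝓘(ℝ, EN) 𝓘(ℝ, EN) (fun n : N => u * n) 1 v))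
    = φ (mfderiv 𝓘(ℝ, EN) 𝓘(ℝ, EH) (fun n : N => σ k * ι n) u
      (mfderiv 𝓘(ℝ, EN) 𝓘(ℝ, EN) (fun n : N => u * n) 1 v))
  rw [mul_one]
end
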